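/- Measuring implies the negation of ℧ (mho): if measuring holds, then for every sequence (f_α)_{α<ω₁} where each f_α is a continuous function from α into ω, there is a club C ⊆ ω₁ such that for every δ ∈ C, the image f_δ''C is a proper subset of ω (i.e., f_δ''C ≠ ω). -/

import Mathlib

noncomputable def omega1 : Ordinal := (Cardinal.aleph 1).ord

def IsLimitPointOf (X : Set Ordinal) (x : Ordinal) : Prop :=
  ∀ α < x, ∃ ε ∈ X, α < ε ∧ ε < x

def IsClosedIn (C : Set Ordinal) (δ : Ordinal) : Prop :=
  C ⊆ Set.Iio δ ∧ ∀ x, x ≠ 0 → x < δ → IsLimitPointOf C x → x ∈ C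

def IsClubIn (C : Set Ordinal) (δ : Ordinal) : Prop :=
  IsClosedIn C δ ∧ ∀ α < δ, ∃ ε ∈ C, α < ε

def IsClubOmega1 (C : Set Ordinal) : Prop := IsClubIn C omega1

def Measures (C : Set Ordinal) (Cs : Ordinal → Set Ordinal) : Prop :=
  ∀ δ ∈ C, ∃ α < δ,
    (∀ x ∈ C, x < δ → α ≤ x → x ∈ Cs δ) ∨ (∀ x ∈ C, α ≤ x → x ∉ Cs δ)


def Measuring : Prop :=
  ∀ Cs : Ordinal.{0} → Set Ordinal.{0}, (∀ δ < omega1, IsClosedIn (Cs δ) δ) →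
    ∃ C, IsClubOmega1 C ∧ Measures C Cs

/-- A nonzero limit point (in the bespoke sense) is a limit ordinal. -/
lemma isLimit_of_isLimitPointOf (X : Set Ordinal) (x : Ordinal) (hx : x ≠ 0)
    (h : IsLimitPointOf X x) : Order.IsSuccLimit x := by
  rw [Ordinal.isSuccLimit_iff, Order.isSuccPrelimit_iff_succ_lt]
  refine ⟨hx, fun y hy => ?_⟩
  by_contra hsucc
  push_neg at hsucc
  have hxs : x = Order.succ y := le_antisymm hsucc (Order.succ_le_of_lt hy)
  obtain ⟨ε, _, hyε, hεx⟩ := h y hy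
  rw [hxs, Order.lt_succ_iff] at hεx
  exact absurd hyε (not_lt.2 hεx)

/-- The image of an initial segment `[0,α]`, `α < δ`, under a continuous `g : δ → ω`
is finite (compactness). -/
lemma image_Iic_finite (g : Ordinal → ℕ) (δ : Ordinal)
    (hc : ∀ x < δ, Order.IsSuccLimit x → ∃ β < x, ∀ y, β ≤ y → y < x → g y = g x) :
    ∀ α < δ, (g '' Set.Iic α).Finite := by
  intro α
  induction α using Ordinal.limitRecOn with
  | zero =>
    intro _
    have : Set.Iic (0 : Ordinal) = {0} := by ext z; simp [nonpos_iff_eq_zero]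
    rw [this]; simp
  | add_one β IH =>
    rw [Ordinal.add_one_eq_succ]
    intro hβδ
    have h1 : Set.Iic (Order.succ β) = insert (Order.succ β) (Set.Iic β) := by
      ext z; rw [Set.mem_Iic, Set.mem_insert_iff, Set.mem_Iic, Order.le_succ_iff_eq_or_le]
    rw [h1, Set.image_insert_eq]
    exact ((IH (lt_trans (Order.lt_succ β) hβδ)).insert _)
  | limit α hα IH =>
    intro hαδ
    obtain ⟨β, hβα, hconst⟩ := hc α hαδ hα
    have hsub : g '' Set.Iic α ⊆ insert (g α) (g '' Set.Iic β) := by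
      rintro _ ⟨z, hz, rfl⟩
      rcases le_or_gt z β with h | h
      · exact Set.mem_insert_of_mem _ ⟨z, h, rfl⟩
      · rcases lt_or_eq_of_le (Set.mem_Iic.mp hz) with h2 | h2
        · rw [hconst z h.le h2]; exact Set.mem_insert _ _
        · rw [h2]; exact Set.mem_insert _ _
    exact Set.Finite.subset ((IH β hβα (hβα.trans hαδ)).insert _) hsub

/-- For any finite set of naturals and any parity there is a natural of that parity
avoiding the set. -/
lemma exists_parity_not_mem (F : Set ℕ) (hF : F.Finite) (b : Bool) :
    ∃ n : ℕ, (Even n ↔ b = true) ∧ n ∉ F := by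
  have hinf : {n : ℕ | Even n ↔ b = true}.Infinite := by
    apply Set.infinite_of_injective_forall_mem
      (f := fun k : ℕ => 2 * k + (if b then 0 else 1))
    case hi => intro a b h; simp only at h; omega
    case hf =>
      intro k
      cases b <;> simp [Set.mem_setOf_eq, Nat.even_add_one, parity_simps]
  obtain ⟨n, hn1, hn2⟩ := (hinf.diff hF).nonempty
  exact ⟨n, hn1, hn2⟩

/-- Measuring implies the negation of mho: for every sequence `(f_α)_{α<ω₁}` of continuous
functions `f_α : α → ω` there is a club `C ⊆ ω₁` such that `f_δ '' C ≠ ω` for all `δ ∈ C`. -/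
theorem measuring_implies_neg_mho (hM : Measuring)
    (f : Ordinal.{0} → Ordinal.{0} → ℕ)
    (hcont : ∀ α, α < omega1 → ∀ x, x < α → Order.IsSuccLimit x →
      ∃ β < x, ∀ y, β ≤ y → y < x → f α y = f α x) :
    ∃ C, IsClubOmega1 C ∧ ∀ δ ∈ C, ∃ n : ℕ, ∀ x ∈ C, x < δ → f δ x ≠ n := by
  -- the clopen sets: points below δ where f δ takes an even value
  set Cs : Ordinal → Set Ordinal := fun δ => {x | x < δ ∧ Even (f δ x)} with hCs
  have hclosed : ∀ δ < omega1, IsClosedIn (Cs δ) δ := by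
    intro δ hδ
    constructor
    · intro x hx; exact hx.1
    · intro x hx0 hxδ hlp
      have hlim : Order.IsSuccLimit x := isLimit_of_isLimitPointOf _ x hx0 hlp
      obtain ⟨β, hβx, hconst⟩ := hcont δ hδ x hxδ hlim
      obtain ⟨ε, hεCs, hβε, hεx⟩ := hlp β hβx
      refine ⟨hxδ, ?_⟩
      rw [← hconst ε hβε.le hεx]
      exact hεCs.2
  obtain ⟨C, hClub, hMeas⟩ := hM Cs hclosed
  refine ⟨C, hClub, ?_⟩
  intro δ hδC
  have hδω : δ < omega1 := hClub.1.1 hδC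
  obtain ⟨α, hαδ, hcase⟩ := hMeas δ hδC
  have hFfin : ((f δ) '' Set.Iic α).Finite :=
    image_Iic_finite (f δ) δ (fun x hx hlim => hcont δ hδω x hx hlim) α hαδ
  rcases hcase with h1 | h2
  · -- tail of C below δ is even; pick an odd n avoiding f δ '' Iic α
    obtain ⟨n, hpar, hnF⟩ := exists_parity_not_mem _ hFfin false
    refine ⟨n, fun x hxC hxδ hfx => ?_⟩
    rcases le_or_gt α x with hax | hax
    · have := (h1 x hxC hxδ hax).2
      rw [hfx] at this
      simp at hpar
      exact (Nat.not_even_iff_odd.mpr hpar) this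
    · exact hnF ⟨x, hax.le, hfx⟩
  · -- tail of C is odd; pick an even n avoiding f δ '' Iic α
    obtain ⟨n, hpar, hnF⟩ := exists_parity_not_mem _ hFfin true
    refine ⟨n, fun x hxC hxδ hfx => ?_⟩
    rcases le_or_gt α x with hax | hax
    · have hx : x ∉ Cs δ := h2 x hxC hax
      have : ¬ Even (f δ x) := fun he => hx ⟨hxδ, he⟩
      rw [hfx] at this
      simp at hpar
      exact this hpar
    · exact hnF ⟨x, hax.le, hfx⟩
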